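/- If a collection of 1-Lipschitz functions (f₁, …, f_s) on ℤ_m is uniform with each suffix, then so is (f₁ + z₁, …, f_s + z_s) for arbitrary integer constants z₁, …, z_s. -/

import Mathlib

open MeasureTheory ProbabilityTheory Filter
open Topology

/-- The ring `ℤ_m` of `m`-adic integers, modelled as base-`m` digit sequences. -/
abbrev Zm (m : ℕ) := ℕ → Fin m

/-- `ω mod m^n`: the natural number formed by the first `n` base-`m` digits of `ω`. -/
def modPow {m : ℕ} (ω : Zm m) (n : ℕ) : ℕ :=
  ∑ i ∈ Finset.range n, (ω i).val * m ^ i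

/-- `f : ℤ_m → ℤ_m` is 1-Lipschitz: the first `n` digits of `f ω` depend only
on the first `n` digits of `ω`. -/
def Lip1 {m : ℕ} (f : Zm m → Zm m) : Prop :=
  ∀ (n : ℕ) (ω₁ ω₂ : Zm m), modPow ω₁ n = modPow ω₂ n → modPow (f ω₁) n = modPow (f ω₂) n

/-- `μ` is the normalized Haar measure on `ℤ_m`: every ball
`{ω : ω mod m^k = a}` has measure `m^{-k}`. -/
def IsHaar {m : ℕ} (μ : Measure (Zm m)) : Prop :=
  ∀ (k a : ℕ), a < m ^ k → μ {ω | modPow ω k = a} = ((m : ENNReal) ^ k)⁻¹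

/-- The vector `φₙ(ω) = ((f₁(ω) mod m^n)/m^n, …, (f_s(ω) mod m^n)/m^n)`. -/
noncomputable def phi {m s : ℕ} (f : Fin s → Zm m → Zm m) (n : ℕ) (ω : Zm m) :
    Fin s → ℝ :=
  fun i => (modPow (f i ω) n : ℝ) / (m : ℝ) ^ n

/-- The cube `J_k(a) = ∏ᵢ [aᵢ/m^k, (aᵢ+1)/m^k) ⊂ [0,1)^s`. -/
def Jcube (m k : ℕ) {s : ℕ} (a : Fin s → ℕ) : Set (Fin s → ℝ) :=
  {x | ∀ i, (a i : ℝ) / (m : ℝ) ^ k ≤ x i ∧ x i < ((a i : ℝ) + 1) / (m : ℝ) ^ k}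

/-- The suffix event `ξ_d = β`, i.e. `ω mod m^d = β`. -/
def suffixEvent (m d β : ℕ) : Set (Zm m) := {ω | modPow ω d = β}

/-- The uniform (Lebesgue) probability distribution on the cube `[0,1)^s`. -/
noncomputable def unifCube (s : ℕ) : Measure (Fin s → ℝ) :=
  volume.restrict (Set.univ.pi fun _ => Set.Ico (0 : ℝ) 1)

/-- The collection `f₁,…,f_s` generates a uniform distribution: `φₙ` converges
weakly to the uniform distribution on `[0,1)^s`. -/
def GeneratesUniform {m s : ℕ} (μ : Measure (Zm m)) (f : Fin s → Zm m → Zm m) : Prop :=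
  ∀ g : BoundedContinuousFunction (Fin s → ℝ) ℝ,
    Tendsto (fun n => ∫ ω, g (phi f n ω) ∂μ) atTop (nhds (∫ x, g x ∂(unifCube s)))

/-- The collection `f₁,…,f_s` is uniform with each suffix: conditionally on
`ξ_d = β`, the probability that `φₙ` hits any cube `J_k(a)` tends to `m^{-ks}`. -/
def UniformWithSuffix {m s : ℕ} (μ : Measure (Zm m)) (f : Fin s → Zm m → Zm m) : Prop :=
  ∀ (k d : ℕ) (a : Fin s → ℕ), (∀ i, a i < m ^ k) → ∀ β < m ^ d,
    Tendsto
      (fun n => ProbabilityTheory.cond μ (suffixEvent m d β) {ω | phi f n ω ∈ Jcube m k a})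
      atTop (nhds (((m : ENNReal) ^ (k * s))⁻¹))

/-- Addition of an integer constant `z` to an `m`-adic integer `ω`, defined
digitwise: the `i`-th digit of `ω + z` is the `i`-th base-`m` digit of the
least nonnegative residue of `(ω mod m^(i+1)) + z` modulo `m^(i+1)`. -/
def addInt (m : ℕ) [NeZero m] (ω : Zm m) (z : ℤ) : Zm m :=
  fun i => ⟨(((modPow ω (i + 1) : ℤ) + z) % (m : ℤ) ^ (i + 1)).toNat / m ^ i % m,
    Nat.mod_lt _ (Nat.pos_of_ne_zero (NeZero.ne m))⟩

lemma modPow_succ {m : ℕ} (ω : Zm m) (n : ℕ) :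
    modPow ω (n + 1) = modPow ω n + (ω n).val * m ^ n :=
  Finset.sum_range_succ _ _

lemma modPow_lt {m : ℕ} (hm : 0 < m) (ω : Zm m) (n : ℕ) : modPow ω n < m ^ n := by
  induction n with
  | zero => simp [modPow]
  | succ n ih =>
    rw [modPow_succ, pow_succ]
    have h1 : (ω n).val * m ^ n ≤ (m - 1) * m ^ n :=
      Nat.mul_le_mul_right _ (Nat.le_sub_one_of_lt (ω n).isLt)
    have hmm : (m - 1) + 1 = m := Nat.succ_pred_eq_of_pos hm
    have h2 : (m - 1) * m ^ n + m ^ n = m ^ n * m := by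
      calc (m - 1) * m ^ n + m ^ n = ((m - 1) + 1) * m ^ n := by ring
        _ = m * m ^ n := by rw [hmm]
        _ = m ^ n * m := mul_comm _ _
    omega

lemma modPow_addInt {m : ℕ} [NeZero m] (ω : Zm m) (z : ℤ) (n : ℕ) :
    (modPow (addInt m ω z) n : ℤ) = ((modPow ω n : ℤ) + z) % (m : ℤ) ^ n := by
  have hm : 0 < m := Nat.pos_of_ne_zero (NeZero.ne m)
  induction n with
  | zero => simp [modPow]
  | succ n ih =>
    have hpow : (0:ℤ) < (m:ℤ) ^ (n+1) := by positivity
    set N : ℕ := (((modPow ω (n + 1) : ℤ) + z) % (m : ℤ) ^ (n + 1)).toNat with hN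
    have hNcast : (N : ℤ) = ((modPow ω (n + 1) : ℤ) + z) % (m : ℤ) ^ (n + 1) :=
      Int.toNat_of_nonneg (Int.emod_nonneg _ (ne_of_gt hpow))
    have hNlt : N < m ^ (n + 1) := by
      have := Int.emod_lt_of_pos ((modPow ω (n + 1) : ℤ) + z) hpow
      rw [← hNcast] at this
      exact_mod_cast this
    -- modPow (addInt m ω z) n = N % m ^ n
    have hdvd : ((m:ℤ) ^ n) ∣ ((m:ℤ) ^ (n+1)) := pow_dvd_pow _ (Nat.le_succ n)
    have key : (modPow (addInt m ω z) n : ℤ) = ((N : ℕ) : ℤ) % (m:ℤ) ^ n := by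
      rw [ih, hNcast, Int.emod_emod_of_dvd _ hdvd]
      rw [modPow_succ ω n]
      push_cast
      rw [add_right_comm, Int.add_mul_emod_self_right]
    have keyN : modPow (addInt m ω z) n = N % m ^ n := by
      have hc : ((m:ℤ)) ^ n = ((m ^ n : ℕ) : ℤ) := by push_cast; ring
      rw [hc] at key
      omega
    have hdig : (addInt m ω z n).val = N / m ^ n % m := rfl
    rw [modPow_succ, keyN, hdig, ← hNcast]
    have : N % m ^ n + N / m ^ n % m * m ^ n = N := by
      have h2 : N % (m ^ n * m) = N % m ^ n + m ^ n * (N / m ^ n % m) := Nat.mod_mul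
      have h3 : N % (m ^ n * m) = N := Nat.mod_eq_of_lt (by rw [← pow_succ]; exact hNlt)
      rw [mul_comm (N / m ^ n % m) (m ^ n)]
      omega
    exact_mod_cast congrArg (Nat.cast : ℕ → ℤ) this

lemma real_char (m k n : ℕ) (hm : 0 < m) (hkn : k ≤ n) (A x : ℕ) :
    ((A : ℝ) / (m:ℝ) ^ k ≤ (x:ℝ) / (m:ℝ) ^ n ∧ (x:ℝ) / (m:ℝ) ^ n < ((A:ℝ) + 1) / (m:ℝ) ^ k)
    ↔ (A * m ^ (n - k) ≤ x ∧ x < (A + 1) * m ^ (n - k)) := by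
  have hmR : (0:ℝ) < m := by exact_mod_cast hm
  have hk : (0:ℝ) < (m:ℝ) ^ k := by positivity
  have hn : (0:ℝ) < (m:ℝ) ^ n := by positivity
  have hpow : (m:ℝ) ^ n = (m:ℝ) ^ (n - k) * (m:ℝ) ^ k := by
    rw [← pow_add]; congr 1; omega
  constructor
  · rintro ⟨h1, h2⟩
    constructor
    · have := (div_le_div_iff₀ hk hn).mp h1
      rw [hpow] at this
      have h3 : (A:ℝ) * ((m:ℝ)^(n-k)) ≤ x := by
        have hk' : (0:ℝ) < (m:ℝ)^k := hk
        nlinarith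
      exact_mod_cast h3
    · have := (div_lt_div_iff₀ hn hk).mp h2
      rw [hpow] at this
      have h3 : (x:ℝ) < ((A:ℝ)+1) * ((m:ℝ)^(n-k)) := by nlinarith
      have h4 : (x:ℝ) < (((A+1) * m^(n-k) : ℕ) : ℝ) := by push_cast; linarith
      exact_mod_cast h4
  · rintro ⟨h1, h2⟩
    have h1' : (A:ℝ) * ((m:ℝ)^(n-k)) ≤ x := by exact_mod_cast h1
    have h2' : (x:ℝ) < ((A:ℝ)+1) * ((m:ℝ)^(n-k)) := by
      have : (x:ℝ) < (((A+1) * m^(n-k) : ℕ) : ℝ) := by exact_mod_cast h2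
      push_cast at this; linarith
    constructor
    · rw [div_le_div_iff₀ hk hn, hpow]; nlinarith
    · rw [div_lt_div_iff₀ hn hk, hpow]; nlinarith

-- inner arithmetic lemma

lemma outer_arith (u M q A x w : ℕ) (z : ℤ) (hu : 0 < u) (hM : 2 ≤ M) (hq : 0 < q)
    (hA : A < q) (hz : z.natAbs ≤ u) (hx : x < u * (M * q))
    (hwcast : (w:ℤ) = ((x:ℤ) + z) % ((u * (M * q) : ℕ) : ℤ))
    (hw1 : A * (u * M) ≤ w) (hw2 : w < (A + 1) * (u * M)) :
    x / u = (A * M + M * q - 1) % (M * q) ∨ x / u = (A * M + M) % (M * q) ∨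
      (A * M ≤ x / u ∧ x / u < A * M + M) := by
  have habs : |z| ≤ (u:ℤ) := by rw [Int.abs_eq_natAbs]; exact_mod_cast hz
  obtain ⟨hzl, hzr⟩ := abs_le.mp habs
  have hR : 0 < u * (M * q) := by positivity
  have hRZ : (0:ℤ) < ((u * (M * q) : ℕ) : ℤ) := by exact_mod_cast hR
  have hwlt : w < u * (M * q) := by
    have h := Int.emod_lt_of_pos ((x:ℤ) + z) hRZ
    rw [← hwcast] at h; exact_mod_cast h
  have hw1' : (A * (u * M) : ℤ) ≤ (w:ℤ) := by exact_mod_cast hw1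
  have hw2' : (w:ℤ) < ((A+1) * (u * M) : ℤ) := by exact_mod_cast hw2
  obtain ⟨c, hc0⟩ : ∃ c : ℤ, (x:ℤ) + z - w = ((u * (M * q) : ℕ):ℤ) * c := by
    refine ⟨((x:ℤ) + z) / ((u * (M * q):ℕ):ℤ), ?_⟩
    rw [hwcast]
    have := Int.mul_ediv_add_emod ((x:ℤ) + z) ((u * (M * q):ℕ):ℤ)
    linarith
  have hxZ : (x:ℤ) < ((u * (M * q):ℕ):ℤ) := by exact_mod_cast hx
  have huR : (u:ℤ) ≤ ((u * (M * q):ℕ):ℤ) := by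
    have : u ≤ u * (M * q) := Nat.le_mul_of_pos_right u (by positivity)
    exact_mod_cast this
  have hwZ0 : (0:ℤ) ≤ (w:ℤ) := by positivity
  have hwZR : (w:ℤ) < ((u * (M * q):ℕ):ℤ) := by exact_mod_cast hwlt
  have hx0 : (0:ℤ) ≤ (x:ℤ) := by positivity
  have hc2 : c < 2 := by
    have hcu : ((u * (M * q):ℕ):ℤ) * c < ((u * (M * q):ℕ):ℤ) * 2 := by
      rw [← hc0]; linarith
    exact lt_of_mul_lt_mul_left hcu (by positivity)
  have hcm2 : -2 < c := by
    have hcl : ((u * (M * q):ℕ):ℤ) * (-2) < ((u * (M * q):ℕ):ℤ) * c := by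
      rw [← hc0]; linarith
    exact lt_of_mul_lt_mul_left hcl (by positivity)
  have hAMq : A * M + M ≤ M * q := by
    have : (A + 1) * M ≤ q * M := Nat.mul_le_mul_right M hA
    nlinarith
  have hRcast : ((u * (M * q) : ℕ):ℤ) = (u:ℤ) * ((M:ℤ) * (q:ℤ)) := by push_cast; ring
  have hctri : c = -1 ∨ c = 0 ∨ c = 1 := by omega
  rcases hctri with hcv | hcv | hcv <;> rw [hcv] at hc0
  · -- c = -1 : x = w - z - R
    have hxeq : (x:ℤ) = (w:ℤ) - z - ((u * (M * q):ℕ):ℤ) := by linarith [hc0]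
    have hzneg : z < 0 := by by_contra hpos; push_neg at hpos; linarith
    have hxu : x < u := by
      have : (x:ℤ) < u := by linarith
      exact_mod_cast this
    have hdiv : x / u = 0 := Nat.div_eq_of_lt hxu
    have hAM : A * M + M = M * q := by
      have h2 : ((A:ℤ)+1) * ((u:ℤ) * M) > (u:ℤ) * ((M:ℤ) * q) - u := by
        push_cast at hw2'
        rw [hRcast] at hxeq
        linarith
      have h5 : M * q ≤ A * M + M := by
        by_contra hcon
        push_neg at hcon
        have hc'' : ((A:ℤ) * M + M + 1) ≤ (M:ℤ) * q := by exact_mod_cast hcon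
        have huZ : (0:ℤ) ≤ (u:ℤ) := by positivity
        have hmul := mul_le_mul_of_nonneg_right hc'' huZ
        ring_nf at hmul h2
        linarith
      omega
    right; left
    rw [hdiv, hAM, Nat.mod_self]
  · -- c = 0 : x = w - z
    have hxeq : (x:ℤ) = (w:ℤ) - z := by linarith [hc0]
    rcases lt_or_ge x (A * M * u) with h1 | h1
    · have hAMpos : 1 ≤ A * M := by
        rcases Nat.eq_zero_or_pos (A * M) with h0 | h0
        · exfalso; rw [h0] at h1; omega
        · exact h0
      have hZ : (A * M * u : ℤ) - u ≤ (x:ℤ) := by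
        have : ((A:ℤ) * M * u) = (A:ℤ) * ((u:ℤ) * M) := by ring
        push_cast
        rw [this]
        push_cast at hw1'
        linarith
      have hlow : (A * M - 1) * u ≤ x := by
        have he : ((A * M - 1) * u : ℕ) = A * M * u - u := by rw [Nat.sub_mul, one_mul]
        rw [he]
        have hxx : ((A * M * u : ℕ) : ℤ) - u ≤ (x:ℤ) := by push_cast; push_cast at hZ; linarith
        omega
      have hdiv : x / u = A * M - 1 := by
        have hh : x < (A * M - 1 + 1) * u := by
          have he : A * M - 1 + 1 = A * M := by omega
          rw [he]; exact h1
        exact Nat.div_eq_of_lt_le hlow hh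
      left
      have hAMlt : A * M - 1 < M * q := by omega
      have he2 : A * M + M * q - 1 = (A * M - 1) + M * q := by omega
      rw [hdiv, he2, Nat.add_mod_right, Nat.mod_eq_of_lt hAMlt]
    · rcases lt_or_ge x ((A * M + M) * u) with h2 | h2
      · right; right
        exact ⟨(Nat.le_div_iff_mul_le hu).mpr h1, (Nat.div_lt_iff_lt_mul hu).mpr h2⟩
      · have hup : x < (A * M + M + 1) * u := by
          have hZ2 : (x:ℤ) < (((A * M + M + 1) * u : ℕ) : ℤ) := by
            push_cast
            push_cast at hw2'
            ring_nf at hw2' ⊢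
            linarith
          exact_mod_cast hZ2
        have hdiv : x / u = A * M + M := Nat.div_eq_of_lt_le h2 hup
        have hstrict : A * M + M < M * q := by
          rcases Nat.lt_or_ge (A * M + M) (M * q) with hgood | hbad
          · exact hgood
          · exfalso
            have heq : A * M + M = M * q := le_antisymm hAMq hbad
            rw [heq] at h2
            have : (M * q) * u < (M * q) * u := by
              calc (M * q) * u ≤ x := h2
                _ < u * (M * q) := hx
                _ = (M * q) * u := by ring
            exact lt_irrefl _ this
        right; left
        rw [hdiv, Nat.mod_eq_of_lt hstrict]
  · -- c = 1 : x = w - z + R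
    have hxeq : (x:ℤ) = (w:ℤ) - z + ((u * (M * q):ℕ):ℤ) := by linarith [hc0]
    have hzw : (w:ℤ) < z := by linarith
    have hA0 : A = 0 := by
      by_contra hcon
      have hA1 : 1 ≤ A := Nat.pos_of_ne_zero hcon
      have hA1' : (1:ℤ) ≤ (A:ℤ) := by exact_mod_cast hA1
      have hMZ : (2:ℤ) ≤ (M:ℤ) := by exact_mod_cast hM
      have huZ : (1:ℤ) ≤ (u:ℤ) := by exact_mod_cast hu
      push_cast at hw1'
      have hstep : (u:ℤ) * M ≤ (A:ℤ) * ((u:ℤ) * M) :=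
        le_mul_of_one_le_left (by positivity) hA1'
      have hstep2 : (u:ℤ) * 2 ≤ (u:ℤ) * M := mul_le_mul_of_nonneg_left hMZ (by positivity)
      linarith
    have hxlow : (M * q - 1) * u ≤ x := by
      have hZ : ((u * (M * q):ℕ):ℤ) - u ≤ (x:ℤ) := by linarith
      have hRu : ((M * q - 1) * u : ℕ) = u * (M * q) - u := by
        rw [Nat.sub_mul, one_mul]; ring_nf
      rw [hRu]
      have hZZ : ((u * (M * q) : ℕ):ℤ) - (u:ℤ) ≤ (x:ℤ) := hZ
      omega
    have hxhi : x < (M * q - 1 + 1) * u := by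
      have he : M * q - 1 + 1 = M * q := by
        have : 0 < M * q := Nat.mul_pos (by omega) hq
        omega
      rw [he]
      calc x < u * (M * q) := hx
        _ = (M * q) * u := by ring
    have hdiv : x / u = M * q - 1 := Nat.div_eq_of_lt_le hxlow hxhi
    left
    rw [hdiv, hA0, Nat.zero_mul, Nat.zero_add]
    have hlt : M * q - 1 < M * q := by
      have : 0 < M * q := Nat.mul_pos (by omega) hq
      omega
    rw [Nat.mod_eq_of_lt hlt]

lemma div_block (x u : ℕ) (hu : 0 < u) : x / u * u ≤ x ∧ x < (x / u + 1) * u := by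
  refine ⟨Nat.div_mul_le_self x u, ?_⟩
  calc x = u * (x / u) + x % u := (Nat.div_add_mod x u).symm
    _ < u * (x / u) + u := by have := Nat.mod_lt x hu; omega
    _ = (x / u + 1) * u := by ring

lemma measurable_modPow {m : ℕ} (n : ℕ) : Measurable (fun ω : Zm m => modPow ω n) := by
  unfold modPow
  refine Finset.measurable_sum _ (fun i _ => ?_)
  exact ((Measurable.of_discrete (f := fun v : Fin m => v.val * m ^ i)).comp (measurable_pi_apply i))

lemma measurableSet_suffixEvent (m d β : ℕ) : MeasurableSet (suffixEvent m d β) :=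
  (measurable_modPow d) (MeasurableSet.singleton β)

lemma mem_cube_iff {m s : ℕ} (hm : 0 < m) {k n : ℕ} (hkn : k ≤ n)
    (g : Fin s → Zm m → Zm m) (a : Fin s → ℕ) (ω : Zm m) :
    phi g n ω ∈ Jcube m k a ↔
      ∀ i, a i * m ^ (n - k) ≤ modPow (g i ω) n ∧ modPow (g i ω) n < (a i + 1) * m ^ (n - k) := by
  unfold phi Jcube
  rw [Set.mem_setOf_eq]
  exact forall_congr' fun i => real_char m k n hm hkn (a i) (modPow (g i ω) n)

lemma inner_arith' (u M q A b x w : ℕ) (z : ℤ) (hu : 0 < u) (hM : 2 ≤ M)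
    (hA : A < q) (hb1 : A * M + 1 ≤ b) (hb2 : b + 2 ≤ A * M + M)
    (hz : z.natAbs ≤ u) (hx1 : b * u ≤ x) (hx2 : x < (b + 1) * u)
    (hwcast : (w:ℤ) = ((x:ℤ) + z) % ((u * (M * q) : ℕ) : ℤ)) :
    A * (u * M) ≤ w ∧ w < (A + 1) * (u * M) := by
  have habs : |z| ≤ (u:ℤ) := by rw [Int.abs_eq_natAbs]; exact_mod_cast hz
  obtain ⟨hzl, hzr⟩ := abs_le.mp habs
  have key1 : (A * (u * M) : ℤ) ≤ (x:ℤ) + z := by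
    have hb1' : ((A * M + 1 : ℕ) : ℤ) ≤ b := by exact_mod_cast hb1
    have hx1' : ((b * u : ℕ):ℤ) ≤ x := by exact_mod_cast hx1
    push_cast at hb1' hx1' ⊢
    nlinarith [hu]
  have key2 : (x:ℤ) + z < ((A + 1) * (u * M) : ℤ) := by
    have hb2' : ((b:ℤ) + 2) ≤ ((A * M + M : ℕ) : ℤ) := by exact_mod_cast hb2
    have hx2' : (x:ℤ) < ((b + 1) * u : ℕ) := by exact_mod_cast hx2
    push_cast at hb2' hx2' ⊢
    nlinarith [hu]
  have hlt : (x:ℤ) + z < ((u * (M * q) : ℕ) : ℤ) := by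
    have hstep : ((A+1) * (u * M) : ℤ) ≤ ((u * (M * q) : ℕ) : ℤ) := by
      push_cast
      have hAq : (A:ℤ) + 1 ≤ q := by exact_mod_cast hA
      have hu' : (0:ℤ) < u := by exact_mod_cast hu
      have hM' : (0:ℤ) < M := by exact_mod_cast (by omega : 0 < M)
      nlinarith
    linarith
  have hge : (0:ℤ) ≤ (x:ℤ) + z := le_trans (by positivity) key1
  rw [Int.emod_eq_of_lt hge hlt] at hwcast
  constructor
  · exact_mod_cast hwcast ▸ key1
  · exact_mod_cast hwcast ▸ key2

lemma aux_base_tendsto (m k : ℕ) (hm : 1 < m) (c : ENNReal) (hc : c ≠ ⊤) :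
    Tendsto (fun t : ℕ => c * ((m:ENNReal)⁻¹) ^ t) atTop (𝓝 0) := by
  have h0 : Tendsto (fun t : ℕ => ((m:ENNReal)⁻¹) ^ t) atTop (𝓝 0) :=
    ENNReal.tendsto_pow_atTop_nhds_zero_of_lt_one
      (ENNReal.inv_lt_one.mpr (by exact_mod_cast hm))
  have := ENNReal.Tendsto.const_mul h0 (Or.inr hc)
  simpa using this

lemma tend_plus (m k s : ℕ) (hm : 1 < m) :
    Tendsto (fun t : ℕ => (((m ^ t + 2 : ℕ) : ENNReal)) ^ s * ((m:ENNReal) ^ ((k + t) * s))⁻¹)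
      atTop (𝓝 (((m:ENNReal) ^ (k * s))⁻¹)) := by
  have hm0 : (m:ENNReal) ≠ 0 := Nat.cast_ne_zero.mpr (by omega)
  have hmT : (m:ENNReal) ≠ ⊤ := ENNReal.natCast_ne_top m
  have hkne : ((m:ENNReal) ^ k) ≠ 0 := pow_ne_zero _ hm0
  have hkneT : ((m:ENNReal) ^ k) ≠ ⊤ := ENNReal.pow_ne_top hmT
  have hrw : ∀ t : ℕ, (((m ^ t + 2 : ℕ) : ENNReal)) ^ s * ((m:ENNReal) ^ ((k + t) * s))⁻¹
      = ((((m:ENNReal)) ^ k)⁻¹ + (2 * (((m:ENNReal)) ^ k)⁻¹) * ((m:ENNReal)⁻¹) ^ t) ^ s := by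
    intro t
    have h1 : ((m:ENNReal) ^ ((k + t) * s))⁻¹ = (((m:ENNReal) ^ (k + t))⁻¹) ^ s := by
      rw [pow_mul, ← ENNReal.inv_pow]
    rw [h1, ← mul_pow]
    congr 1
    have htne : ((m:ENNReal) ^ t) ≠ 0 := pow_ne_zero _ hm0
    have htneT : ((m:ENNReal) ^ t) ≠ ⊤ := ENNReal.pow_ne_top hmT
    push_cast
    rw [pow_add, ENNReal.mul_inv (Or.inl hkne) (Or.inl hkneT), add_mul]
    congr 1
    · rw [mul_comm (((m:ENNReal)) ^ k)⁻¹ _, ← mul_assoc,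
        ENNReal.mul_inv_cancel htne htneT, one_mul]
    · simp [ENNReal.inv_pow, mul_assoc]
  refine Tendsto.congr (fun t => (hrw t).symm) ?_
  have hbase : Tendsto
      (fun t : ℕ => (((m:ENNReal)) ^ k)⁻¹ + (2 * (((m:ENNReal)) ^ k)⁻¹) * ((m:ENNReal)⁻¹) ^ t)
      atTop (𝓝 ((((m:ENNReal)) ^ k)⁻¹)) := by
    have h1 := aux_base_tendsto m k hm (2 * (((m:ENNReal)) ^ k)⁻¹)
      (ENNReal.mul_ne_top (by norm_num) (ENNReal.inv_ne_top.mpr hkne))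
    have hconst : Tendsto (fun _ : ℕ => (((m:ENNReal)) ^ k)⁻¹) atTop
        (𝓝 ((((m:ENNReal)) ^ k)⁻¹)) := tendsto_const_nhds
    have := Tendsto.add hconst h1
    simpa using this
  have := ((ENNReal.continuous_pow s).tendsto ((((m:ENNReal)) ^ k)⁻¹)).comp hbase
  have hlim : ((((m:ENNReal)) ^ k)⁻¹) ^ s = ((m:ENNReal) ^ (k * s))⁻¹ := by
    rw [pow_mul, ← ENNReal.inv_pow]
  rw [hlim] at this
  exact this

lemma tend_minus (m k s : ℕ) (hm : 1 < m) :
    Tendsto (fun t : ℕ => (((m ^ t - 2 : ℕ) : ENNReal)) ^ s * ((m:ENNReal) ^ ((k + t) * s))⁻¹)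
      atTop (𝓝 (((m:ENNReal) ^ (k * s))⁻¹)) := by
  have hm0 : (m:ENNReal) ≠ 0 := Nat.cast_ne_zero.mpr (by omega)
  have hmT : (m:ENNReal) ≠ ⊤ := ENNReal.natCast_ne_top m
  have hkne : ((m:ENNReal) ^ k) ≠ 0 := pow_ne_zero _ hm0
  have hkneT : ((m:ENNReal) ^ k) ≠ ⊤ := ENNReal.pow_ne_top hmT
  have hrw : ∀ t : ℕ, 1 ≤ t → (((m ^ t - 2 : ℕ) : ENNReal)) ^ s * ((m:ENNReal) ^ ((k + t) * s))⁻¹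
      = ((((m:ENNReal)) ^ k)⁻¹ - (2 * (((m:ENNReal)) ^ k)⁻¹) * ((m:ENNReal)⁻¹) ^ t) ^ s := by
    intro t ht
    have h2mt : 2 ≤ m ^ t := le_trans hm (Nat.le_self_pow (by omega) m)
    have hcast : ((m ^ t - 2 : ℕ) : ENNReal) = ((m:ENNReal)) ^ t - 2 := by
      have := ENNReal.natCast_sub (m ^ t) 2
      rw [this]; push_cast; ring
    have h1 : ((m:ENNReal) ^ ((k + t) * s))⁻¹ = (((m:ENNReal) ^ (k + t))⁻¹) ^ s := by
      rw [pow_mul, ← ENNReal.inv_pow]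
    rw [hcast, h1, ← mul_pow]
    congr 1
    have htne : ((m:ENNReal) ^ t) ≠ 0 := pow_ne_zero _ hm0
    have htneT : ((m:ENNReal) ^ t) ≠ ⊤ := ENNReal.pow_ne_top hmT
    rw [pow_add, ENNReal.mul_inv (Or.inl hkne) (Or.inl hkneT),
      ENNReal.sub_mul (fun _ _ => ENNReal.mul_ne_top
        (ENNReal.inv_ne_top.mpr hkne) (ENNReal.inv_ne_top.mpr htne))]
    congr 1
    · rw [mul_comm (((m:ENNReal)) ^ k)⁻¹ _, ← mul_assoc,
        ENNReal.mul_inv_cancel htne htneT, one_mul]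
    · simp [ENNReal.inv_pow, mul_assoc]
  have hbase : Tendsto
      (fun t : ℕ => (((m:ENNReal)) ^ k)⁻¹ - (2 * (((m:ENNReal)) ^ k)⁻¹) * ((m:ENNReal)⁻¹) ^ t)
      atTop (𝓝 ((((m:ENNReal)) ^ k)⁻¹)) := by
    have h1 := aux_base_tendsto m k hm (2 * (((m:ENNReal)) ^ k)⁻¹)
      (ENNReal.mul_ne_top (by norm_num) (ENNReal.inv_ne_top.mpr hkne))
    have hconst : Tendsto (fun _ : ℕ => (((m:ENNReal)) ^ k)⁻¹) atTop
        (𝓝 ((((m:ENNReal)) ^ k)⁻¹)) := tendsto_const_nhds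
    have := ENNReal.Tendsto.sub hconst h1 (Or.inl (ENNReal.inv_ne_top.mpr hkne))
    simpa using this
  have hpow := ((ENNReal.continuous_pow s).tendsto ((((m:ENNReal)) ^ k)⁻¹)).comp hbase
  have hlim : ((((m:ENNReal)) ^ k)⁻¹) ^ s = ((m:ENNReal) ^ (k * s))⁻¹ := by
    rw [pow_mul, ← ENNReal.inv_pow]
  rw [hlim] at hpow
  refine Tendsto.congr' ?_ hpow
  filter_upwards [eventually_ge_atTop 1] with t ht
  exact (hrw t ht).symm

lemma key_bounds (m s : ℕ) [NeZero m] (hm : 1 < m) (f : Fin s → Zm m → Zm m)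
    (z : Fin s → ℤ) (k t : ℕ) (a : Fin s → ℕ) (ha : ∀ i, a i < m ^ k) (ht : 1 ≤ t) :
    ∃ Bplus Bbad : Finset (Fin s → ℕ),
      (∀ b ∈ Bplus, ∀ i, b i < m ^ (k + t)) ∧
      (∀ b ∈ Bbad, ∀ i, b i < m ^ (k + t)) ∧
      Bplus.card ≤ (m ^ t + 2) ^ s ∧
      Bbad.card = m ^ ((k + t) * s) - (m ^ t - 2) ^ s ∧
      (m ^ t - 2) ^ s ≤ m ^ ((k + t) * s) ∧
      (∀ n : ℕ, k + t + (Finset.univ.sup fun i => (z i).natAbs) ≤ n →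
        ({ω | phi (fun i ω => addInt m (f i ω) (z i)) n ω ∈ Jcube m k a} ⊆
          ⋃ b ∈ Bplus, {ω | phi f n ω ∈ Jcube m (k + t) b}) ∧
        ({ω | phi (fun i ω => addInt m (f i ω) (z i)) n ω ∈ Jcube m k a}ᶜ ⊆
          ⋃ b ∈ Bbad, {ω | phi f n ω ∈ Jcube m (k + t) b})) := by
  have hm0 : 0 < m := by omega
  set M := m ^ t with hMdef
  set q := m ^ k with hqdef
  have hM2 : 2 ≤ M := le_trans hm (Nat.le_self_pow (by omega) m)
  have hq0 : 0 < q := pow_pos hm0 k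
  have hKpow : M * q = m ^ (k + t) := by
    rw [hMdef, hqdef, ← pow_add, add_comm]
  have hAMq : ∀ i, a i * M + M ≤ M * q := by
    intro i
    calc a i * M + M = (a i + 1) * M := by ring
      _ ≤ q * M := Nat.mul_le_mul_right _ (ha i)
      _ = M * q := mul_comm _ _
  -- the finsets
  set Splus : Fin s → Finset ℕ := fun i =>
    insert ((a i * M + M * q - 1) % (M * q))
      (insert ((a i * M + M) % (M * q)) (Finset.Ico (a i * M) (a i * M + M))) with hSplusdef
  set Bplus := Fintype.piFinset Splus with hBplusdef
  set Bminus := Fintype.piFinset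
    (fun i => Finset.Ico (a i * M + 1) (a i * M + (M - 1))) with hBminusdef
  set Full := Fintype.piFinset (fun _ : Fin s => Finset.range (M * q)) with hFulldef
  refine ⟨Bplus, Full \ Bminus, ?_, ?_, ?_, ?_, ?_, ?_⟩
  · -- Bplus coordinate bounds
    intro b hb i
    have hbi := Fintype.mem_piFinset.mp hb i
    rw [← hKpow]
    have hMq0 : 0 < M * q := by positivity
    rcases Finset.mem_insert.mp hbi with h | h
    · rw [h]; exact Nat.mod_lt _ hMq0
    rcases Finset.mem_insert.mp h with h | h
    · rw [h]; exact Nat.mod_lt _ hMq0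
    · have h1 := (Finset.mem_Ico.mp h).2
      have h2 := hAMq i
      omega
  · -- Bbad coordinate bounds
    intro b hb i
    have hbF := (Finset.mem_sdiff.mp hb).1
    have := Finset.mem_range.mp (Fintype.mem_piFinset.mp hbF i)
    rw [← hKpow]; exact this
  · -- card Bplus
    rw [hBplusdef, Fintype.card_piFinset]
    calc ∏ i : Fin s, (Splus i).card ≤ ∏ _i : Fin s, (M + 2) := by
          refine Finset.prod_le_prod (fun _ _ => Nat.zero_le _) (fun i _ => ?_)
          calc (Splus i).card ≤ (insert ((a i * M + M) % (M * q))
                  (Finset.Ico (a i * M) (a i * M + M))).card + 1 :=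
                Finset.card_insert_le _ _
            _ ≤ ((Finset.Ico (a i * M) (a i * M + M)).card + 1) + 1 := by
                have := Finset.card_insert_le ((a i * M + M) % (M * q))
                  (Finset.Ico (a i * M) (a i * M + M))
                omega
            _ ≤ M + 2 := by rw [Nat.card_Ico]; omega
      _ = (M + 2) ^ s := by
          rw [Finset.prod_const, Finset.card_univ, Fintype.card_fin]
  · -- card Bbad
    have hsub : Bminus ⊆ Full := by
      intro b hb
      rw [hFulldef, Fintype.mem_piFinset]
      intro i
      have := Finset.mem_Ico.mp (Fintype.mem_piFinset.mp hb i)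
      rw [Finset.mem_range]
      have := hAMq i
      omega
    rw [Finset.card_sdiff_of_subset hsub]
    have hFull : Full.card = m ^ ((k + t) * s) := by
      rw [hFulldef, Fintype.card_piFinset]
      simp only [Finset.card_range]
      rw [Finset.prod_const, Finset.card_univ, Fintype.card_fin, hKpow, ← pow_mul]
    have hBm : Bminus.card = (M - 2) ^ s := by
      rw [hBminusdef, Fintype.card_piFinset]
      have : ∀ i : Fin s, (Finset.Ico (a i * M + 1) (a i * M + (M - 1))).card = M - 2 := by
        intro i; rw [Nat.card_Ico]; omega
      rw [Finset.prod_congr rfl (fun i _ => this i), Finset.prod_const,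
        Finset.card_univ, Fintype.card_fin]
    rw [hFull, hBm]
  · -- (M-2)^s ≤ m^((k+t)*s)
    have h1 : M - 2 ≤ m ^ (k + t) := by
      have : M ≤ M * q := Nat.le_mul_of_pos_right M hq0
      omega
    calc (M - 2) ^ s ≤ (m ^ (k + t)) ^ s := Nat.pow_le_pow_left h1 s
      _ = m ^ ((k + t) * s) := by rw [← pow_mul]
  · -- the inclusions
    intro n hn
    have hKn : k + t ≤ n := by omega
    have hkn : k ≤ n := by omega
    set u := m ^ (n - (k + t)) with hudef
    have hu : 0 < u := pow_pos hm0 _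
    have hzle : ∀ i, (z i).natAbs ≤ u := by
      intro i
      have h1 : (z i).natAbs ≤ Finset.univ.sup fun i => (z i).natAbs :=
        Finset.le_sup (f := fun i => (z i).natAbs) (Finset.mem_univ i)
      have h2 : n - (k + t) < u := Nat.lt_pow_self hm
      omega
    have hnkk : m ^ (n - k) = u * M := by
      rw [hudef, hMdef, ← pow_add]; congr 1; omega
    have hnfull : m ^ n = u * (M * q) := by
      have h1 : u * (M * q) = m ^ ((n - (k + t)) + (t + k)) := by
        rw [pow_add, pow_add, hudef, hMdef, hqdef]
      rw [h1]; congr 1; omega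
    have hwcast : ∀ (ω : Zm m) (i : Fin s),
        ((modPow (addInt m (f i ω) (z i)) n : ℕ) : ℤ) =
          ((modPow (f i ω) n : ℤ) + z i) % ((u * (M * q) : ℕ) : ℤ) := by
      intro ω i
      rw [modPow_addInt (f i ω) (z i) n]
      congr 1
      rw [← hnfull]; push_cast; ring
    have hxlt : ∀ (ω : Zm m) (i : Fin s), modPow (f i ω) n < u * (M * q) := by
      intro ω i
      rw [← hnfull]; exact modPow_lt hm0 (f i ω) n
    have hcube_mem : ∀ ω : Zm m,
        ω ∈ {ω | phi f n ω ∈ Jcube m (k + t) (fun i => modPow (f i ω) n / u)} := by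
      intro ω
      rw [Set.mem_setOf_eq, mem_cube_iff hm0 hKn]
      intro i
      have hb := div_block (modPow (f i ω) n) u hu
      rw [← hudef] at *
      exact hb
    constructor
    · -- E ⊆ ⋃ Bplus
      intro ω hω
      rw [Set.mem_setOf_eq, mem_cube_iff hm0 hkn, hnkk] at hω
      refine Set.mem_biUnion (Fintype.mem_piFinset.mpr fun i => ?_) (hcube_mem ω)
      have hout := outer_arith u M q (a i) (modPow (f i ω) n)
        (modPow (addInt m (f i ω) (z i)) n) (z i) hu hM2 hq0 (ha i) (hzle i)
        (hxlt ω i) (hwcast ω i) (hω i).1 (hω i).2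
      rw [hSplusdef]
      rcases hout with hv | hv | hv
      · rw [hv]; exact Finset.mem_insert_self _ _
      · rw [hv]; exact Finset.mem_insert_of_mem (Finset.mem_insert_self _ _)
      · exact Finset.mem_insert_of_mem (Finset.mem_insert_of_mem
          (Finset.mem_Ico.mpr ⟨hv.1, hv.2⟩))
    · -- Eᶜ ⊆ ⋃ Bbad
      intro ω hω
      rw [Set.mem_compl_iff, Set.mem_setOf_eq] at hω
      have hbFull : (fun i => modPow (f i ω) n / u) ∈ Full := by
        rw [hFulldef, Fintype.mem_piFinset]
        intro i
        rw [Finset.mem_range, Nat.div_lt_iff_lt_mul hu]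
        calc modPow (f i ω) n < u * (M * q) := hxlt ω i
          _ = M * q * u := by ring
      have hbNot : (fun i => modPow (f i ω) n / u) ∉ Bminus := by
        intro hmem
        apply hω
        rw [mem_cube_iff hm0 hkn, hnkk]
        intro i
        have hbi := Finset.mem_Ico.mp (Fintype.mem_piFinset.mp hmem i)
        have hdb := div_block (modPow (f i ω) n) u hu
        exact inner_arith' u M q (a i) (modPow (f i ω) n / u) (modPow (f i ω) n)
          (modPow (addInt m (f i ω) (z i)) n) (z i) hu hM2 (ha i) hbi.1
          (by omega) (hzle i) hdb.1 hdb.2 (hwcast ω i)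
      exact Set.mem_biUnion (Finset.mem_sdiff.mpr ⟨hbFull, hbNot⟩) (hcube_mem ω)

/-- If `(f₁,…,f_s)` is uniform with each suffix, then so is
`(f₁ + z₁, …, f_s + z_s)` for arbitrary integer constants `z₁,…,z_s`. -/
theorem stmt15 (m s : ℕ) (hm : 1 < m) (hs : 1 ≤ s) [NeZero m]
    (μ : Measure (Zm m)) [IsProbabilityMeasure μ] (hμ : IsHaar μ)
    (f : Fin s → Zm m → Zm m) (hf : ∀ i, Lip1 (f i))
    (h : UniformWithSuffix μ f) (z : Fin s → ℤ) :
    UniformWithSuffix μ (fun i ω => addInt m (f i ω) (z i)) := by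
  intro k d a ha β hβ
  have hm0 : 0 < m := by omega
  have hmE0 : (m:ENNReal) ≠ 0 := by
    simp only [ne_eq, Nat.cast_eq_zero]; omega
  have hmET : (m:ENNReal) ≠ ⊤ := ENNReal.natCast_ne_top m
  have hSmeas : MeasurableSet (suffixEvent m d β) := measurableSet_suffixEvent m d β
  have hμS : μ (suffixEvent m d β) = ((m:ENNReal) ^ d)⁻¹ := hμ d β hβ
  have hμS0 : μ (suffixEvent m d β) ≠ 0 := by
    rw [hμS]; exact ENNReal.inv_ne_zero.mpr (ENNReal.pow_ne_top hmET)
  have hμST : μ (suffixEvent m d β) ≠ ⊤ := by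
    rw [hμS]; exact ENNReal.inv_ne_top.mpr (pow_ne_zero d hmE0)
  set ν := ProbabilityTheory.cond μ (suffixEvent m d β) with hνdef
  have hcond_univ : ν Set.univ = 1 := by
    rw [hνdef, cond_apply hSmeas, Set.inter_univ]
    exact ENNReal.inv_mul_cancel hμS0 hμST
  have hLne : ((m:ENNReal) ^ (k * s))⁻¹ ≠ ⊤ := ENNReal.inv_ne_top.mpr (pow_ne_zero _ hmE0)
  rw [ENNReal.tendsto_atTop hLne]
  intro ε hε
  have hε2 : (0:ENNReal) < ε / 2 := ENNReal.half_pos (ne_of_gt hε)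
  obtain ⟨T1, hT1⟩ := (ENNReal.tendsto_atTop hLne).mp (tend_plus m k s hm) (ε / 2) hε2
  obtain ⟨T2, hT2⟩ := (ENNReal.tendsto_atTop hLne).mp (tend_minus m k s hm) (ε / 2) hε2
  set t := max 1 (max T1 T2) with htdef
  have ht1 : 1 ≤ t := le_max_left _ _
  have hFplus : ((m ^ t + 2 : ℕ) : ENNReal) ^ s * ((m:ENNReal) ^ ((k + t) * s))⁻¹
      ≤ ((m:ENNReal) ^ (k * s))⁻¹ + ε / 2 :=
    (hT1 t (le_trans (le_max_left T1 T2) (le_max_right 1 (max T1 T2)))).2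
  have hFminus : ((m:ENNReal) ^ (k * s))⁻¹ - ε / 2
      ≤ ((m ^ t - 2 : ℕ) : ENNReal) ^ s * ((m:ENNReal) ^ ((k + t) * s))⁻¹ :=
    (hT2 t (le_trans (le_max_right T1 T2) (le_max_right 1 (max T1 T2)))).1
  obtain ⟨Bplus, Bbad, hBpB, hBbB, hBpcard, hBbcard, hle, hincl⟩ :=
    key_bounds m s hm f z k t a ha ht1
  have hLKne : ((m:ENNReal) ^ ((k + t) * s))⁻¹ ≠ ⊤ :=
    ENNReal.inv_ne_top.mpr (pow_ne_zero _ hmE0)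
  have hsum_plus : Tendsto (fun n => ∑ b ∈ Bplus,
      ν {ω | phi f n ω ∈ Jcube m (k + t) b})
      atTop (𝓝 ((Bplus.card : ENNReal) * ((m:ENNReal) ^ ((k + t) * s))⁻¹)) := by
    have := tendsto_finset_sum Bplus (fun b hb => h (k + t) d b (hBpB b hb) β hβ)
    simpa [hνdef, Finset.sum_const, nsmul_eq_mul] using this
  have hsum_bad : Tendsto (fun n => ∑ b ∈ Bbad,
      ν {ω | phi f n ω ∈ Jcube m (k + t) b})
      atTop (𝓝 ((Bbad.card : ENNReal) * ((m:ENNReal) ^ ((k + t) * s))⁻¹)) := by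
    have := tendsto_finset_sum Bbad (fun b hb => h (k + t) d b (hBbB b hb) β hβ)
    simpa [hνdef, Finset.sum_const, nsmul_eq_mul] using this
  have hplim_ne : (Bplus.card : ENNReal) * ((m:ENNReal) ^ ((k + t) * s))⁻¹ ≠ ⊤ :=
    ENNReal.mul_ne_top (ENNReal.natCast_ne_top _) hLKne
  have hblim_ne : (Bbad.card : ENNReal) * ((m:ENNReal) ^ ((k + t) * s))⁻¹ ≠ ⊤ :=
    ENNReal.mul_ne_top (ENNReal.natCast_ne_top _) hLKne
  obtain ⟨N1, hN1⟩ := (ENNReal.tendsto_atTop hplim_ne).mp hsum_plus (ε / 2) hε2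
  obtain ⟨N2, hN2⟩ := (ENNReal.tendsto_atTop hblim_ne).mp hsum_bad (ε / 2) hε2
  refine ⟨max (max N1 N2) (k + t + (Finset.univ.sup fun i => (z i).natAbs)),
    fun n hn => ?_⟩
  obtain ⟨hinc1, hinc2⟩ := hincl n (le_trans (le_max_right _ _) hn)
  have hn1 : N1 ≤ n := le_trans (le_trans (le_max_left _ _) (le_max_left _ _)) hn
  have hn2 : N2 ≤ n := le_trans (le_trans (le_max_right _ _) (le_max_left _ _)) hn
  simp only [Set.mem_Icc]
  set E : Set (Zm m) :=
    {ω | phi (fun i ω => addInt m (f i ω) (z i)) n ω ∈ Jcube m k a} with hEdef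
  have hupper : ν E ≤ ((m:ENNReal) ^ (k * s))⁻¹ + ε := by
    calc ν E ≤ ν (⋃ b ∈ Bplus, {ω | phi f n ω ∈ Jcube m (k + t) b}) :=
          measure_mono hinc1
      _ ≤ ∑ b ∈ Bplus, ν {ω | phi f n ω ∈ Jcube m (k + t) b} :=
          measure_biUnion_finset_le _ _
      _ ≤ (Bplus.card : ENNReal) * ((m:ENNReal) ^ ((k + t) * s))⁻¹ + ε / 2 :=
          (hN1 n hn1).2
      _ ≤ (((m ^ t + 2) ^ s : ℕ) : ENNReal) * ((m:ENNReal) ^ ((k + t) * s))⁻¹ + ε / 2 :=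
          add_le_add_left (mul_le_mul_left (Nat.cast_le.mpr hBpcard) _) _
      _ = ((m ^ t + 2 : ℕ) : ENNReal) ^ s * ((m:ENNReal) ^ ((k + t) * s))⁻¹ + ε / 2 := by
          push_cast; ring
      _ ≤ (((m:ENNReal) ^ (k * s))⁻¹ + ε / 2) + ε / 2 := add_le_add_left hFplus _
      _ = ((m:ENNReal) ^ (k * s))⁻¹ + ε := by rw [add_assoc, ENNReal.add_halves]
  have hone : (1:ENNReal) ≤ ν E + ∑ b ∈ Bbad, ν {ω | phi f n ω ∈ Jcube m (k + t) b} := by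
    calc (1:ENNReal) = ν Set.univ := hcond_univ.symm
      _ = ν (E ∪ Eᶜ) := by rw [Set.union_compl_self]
      _ ≤ ν E + ν Eᶜ := measure_union_le _ _
      _ ≤ ν E + ∑ b ∈ Bbad, ν {ω | phi f n ω ∈ Jcube m (k + t) b} :=
          add_le_add_right (le_trans (measure_mono hinc2)
            (measure_biUnion_finset_le _ _)) _
  have hid : (Bbad.card : ENNReal) * ((m:ENNReal) ^ ((k + t) * s))⁻¹
      + ((m ^ t - 2 : ℕ) : ENNReal) ^ s * ((m:ENNReal) ^ ((k + t) * s))⁻¹ = 1 := by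
    rw [hBbcard]
    rw [show ((m ^ t - 2 : ℕ) : ENNReal) ^ s = (((m ^ t - 2) ^ s : ℕ) : ENNReal) by
      push_cast; ring]
    rw [← add_mul, ← Nat.cast_add, Nat.sub_add_cancel hle]
    rw [show ((m ^ ((k + t) * s) : ℕ) : ENNReal) = (m:ENNReal) ^ ((k + t) * s) by
      push_cast; ring]
    exact ENNReal.mul_inv_cancel (pow_ne_zero _ hmE0) (ENNReal.pow_ne_top hmET)
  have hminus_le : ((m ^ t - 2 : ℕ) : ENNReal) ^ s * ((m:ENNReal) ^ ((k + t) * s))⁻¹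
      ≤ ν E + ε / 2 := by
    refine (ENNReal.add_le_add_iff_right hblim_ne).mp ?_
    calc ((m ^ t - 2 : ℕ) : ENNReal) ^ s * ((m:ENNReal) ^ ((k + t) * s))⁻¹
        + (Bbad.card : ENNReal) * ((m:ENNReal) ^ ((k + t) * s))⁻¹ = 1 := by
          rw [add_comm]; exact hid
      _ ≤ ν E + ∑ b ∈ Bbad, ν {ω | phi f n ω ∈ Jcube m (k + t) b} := hone
      _ ≤ ν E + ((Bbad.card : ENNReal) * ((m:ENNReal) ^ ((k + t) * s))⁻¹ + ε / 2) :=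
          add_le_add_right (hN2 n hn2).2 _
      _ = (ν E + ε / 2) + (Bbad.card : ENNReal) * ((m:ENNReal) ^ ((k + t) * s))⁻¹ := by
          ring
  have hlower : ((m:ENNReal) ^ (k * s))⁻¹ ≤ ν E + ε := by
    calc ((m:ENNReal) ^ (k * s))⁻¹
        ≤ ((m ^ t - 2 : ℕ) : ENNReal) ^ s * ((m:ENNReal) ^ ((k + t) * s))⁻¹ + ε / 2 :=
          tsub_le_iff_right.mp hFminus
      _ ≤ (ν E + ε / 2) + ε / 2 := add_le_add_left hminus_le _
      _ = ν E + ε := by rw [add_assoc, ENNReal.add_halves]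
  exact ⟨tsub_le_iff_right.mpr hlower, hupper⟩
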